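/- Let A be a complex Banach algebra, s a fixed nonzero complex number with |s| < 1, r > 2 a real number, and θ ≥ 0. Suppose f : A³ → A satisfies f(x, 0, a) = f(0, z, a) = f(x, z, 0) = 0 for all x, z, a ∈ A and, for all λ, μ, η ∈ T¹ and all x, y, z, w, a, b ∈ A, ‖2f(λ(x+y)/2, μ(z−w), η(a+b)) + 2f(λ(x−y)/2, μ(z+w), η(a−b)) − λμη(2f(x,z,a) − 2f(x,w,b) + 2f(y,z,b) − 2f(y,w,a))‖ ≤ ‖s · D₁f(x, y, z, w, a, b)‖ + θ(‖x‖^r + ‖y‖^r)(‖z‖^r + ‖w‖^r)(‖a‖^r + ‖b‖^r). Then there exists a unique ℂ-trilinear mapping D : A³ → A such that ‖f(x, z, a) − D(x, z, a)‖ ≤ (2^r θ/(2(2^r − 2))) ‖x‖^r ‖z‖^r ‖a‖^r for all x, z, a ∈ A. If, in addition, f satisfies ‖f(xy, z, a) − f(x, z, a)y − x f(y, z, a)‖ ≤ θ(‖x‖^r + ‖y‖^r)‖z‖^r ‖a‖^r for all x, y, z, a ∈ A, and ‖f(x_{σ(1)}, x_{σ(2)}, x_{σ(3)}) − f(x₁,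 x₂, x₃)‖ ≤ θ ‖x₁‖^r ‖x₂‖^r ‖x₃‖^r for all x₁, x₂, x₃ ∈ A and every permutation (σ(1), σ(2), σ(3)) of (1,2,3), then D is a permuting triderivation. -/

import Mathlib

/-- A mapping `f : X³ → Y` is *tri-additive* if it is additive in each variable. -/
def TriAdditive {X Y : Type*} [AddCommGroup X] [AddCommGroup Y]
    (f : X → X → X → Y) : Prop :=
  (∀ x x' z a : X, f (x + x') z a = f x z a + f x' z a) ∧
  (∀ x z z' a : X, f x (z + z') a = f x z a + f x z' a) ∧
  (∀ x z a a' : X, f x z (a + a') = f x z a + f x z a')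

/-- A mapping `f : X³ → Y` is *ℂ-trilinear* if it is ℂ-linear in each variable. -/
def CTrilinear {X Y : Type*} [AddCommGroup X] [Module ℂ X] [AddCommGroup Y] [Module ℂ Y]
    (f : X → X → X → Y) : Prop :=
  TriAdditive f ∧
  (∀ (c : ℂ) (x z a : X), f (c • x) z a = c • f x z a) ∧
  (∀ (c : ℂ) (x z a : X), f x (c • z) a = c • f x z a) ∧
  (∀ (c : ℂ) (x z a : X), f x z (c • a) = c • f x z a)

/-- `D₁f(x, y, z, w, a, b)`. -/
def D₁ {X Y : Type*} [AddCommGroup X] [Module ℂ X] [AddCommGroup Y] [Module ℂ Y]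
    (f : X → X → X → Y) (x y z w a b : X) : Y :=
  f (x + y) (z - w) (a + b) + f (x - y) (z + w) (a - b)
    - (2 : ℂ) • f x z a + (2 : ℂ) • f x w b - (2 : ℂ) • f y z b + (2 : ℂ) • f y w a

/-- `D₂f(x, y, z, w, a, b)`. -/
noncomputable def D₂ {X Y : Type*} [AddCommGroup X] [Module ℂ X] [AddCommGroup Y] [Module ℂ Y]
    (f : X → X → X → Y) (x y z w a b : X) : Y :=
  (2 : ℂ) • f ((2 : ℂ)⁻¹ • (x + y)) (z - w) (a + b)
    + (2 : ℂ) • f ((2 : ℂ)⁻¹ • (x - y)) (z + w) (a - b)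
    - (2 : ℂ) • f x z a + (2 : ℂ) • f x w b - (2 : ℂ) • f y z b + (2 : ℂ) • f y w a


/-- A ℂ-trilinear `D : A³ → A` is a *permuting triderivation* if it is a derivation in the
first variable and is invariant under every permutation of its three variables. -/
def PermutingTriderivation {A : Type*} [Ring A] [Module ℂ A]
    (D : A → A → A → A) : Prop :=
  CTrilinear D ∧
  (∀ x y z w : A, D (x * y) z w = D x z w * y + x * D y z w) ∧
  (∀ (σ : Equiv.Perm (Fin 3)) (x : Fin 3 → A),
    D (x (σ 0)) (x (σ 1)) (x (σ 2)) = D (x 0) (x 1) (x 2))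

variable {A : Type*} [NormedRing A] [NormedAlgebra ℂ A] [CompleteSpace A]
open Filter Topology

lemma aux_clin {X Y : Type*} [AddCommGroup X] [Module ℂ X] [AddCommGroup Y] [Module ℂ Y]
    (g : X → Y) (hadd : ∀ u v, g (u + v) = g u + g v)
    (hunit : ∀ c : ℂ, ‖c‖ = 1 → ∀ u, g (c • u) = c • g u) :
    ∀ (c : ℂ) (u : X), g (c • u) = c • g u := by
  have h0 : g 0 = 0 := by
    have h := hadd 0 0
    rw [add_zero] at h
    exact (left_eq_add.mp h)
  have hnat : ∀ (n : ℕ) (u : X), g ((n : ℂ) • u) = (n : ℂ) • g u := by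
    intro n
    induction n with
    | zero => intro u; simp [h0]
    | succ n ih =>
      intro u
      have : ((n + 1 : ℕ) : ℂ) • u = (n : ℂ) • u + u := by
        push_cast; rw [add_smul, one_smul]
      rw [this, hadd, ih]
      push_cast
      rw [add_smul, one_smul]
  have hreal2 : ∀ (t : ℝ), |t| ≤ 1 → ∀ u : X, g (((2 * t : ℝ) : ℂ) • u) = ((2 * t : ℝ) : ℂ) • g u := by
    intro t ht u
    set b : ℝ := Real.sqrt (1 - t ^ 2) with hb
    have hb2 : b ^ 2 = 1 - t ^ 2 := by
      rw [hb]
      exact Real.sq_sqrt (by nlinarith [abs_nonneg t, sq_abs t, sq_nonneg t])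
    set l1 : ℂ := (t : ℂ) + (b : ℂ) * Complex.I with hl1
    set l2 : ℂ := (t : ℂ) - (b : ℂ) * Complex.I with hl2
    have hn1 : ‖l1‖ = 1 := by
      rw [hl1, Complex.norm_add_mul_I]
      rw [hb2]; simp
    have hn2 : ‖l2‖ = 1 := by
      rw [hl2, sub_eq_add_neg, ← neg_mul, ← Complex.ofReal_neg,
        Complex.norm_add_mul_I]
      rw [neg_pow, hb2]; simp
    have hsum : l1 + l2 = ((2 * t : ℝ) : ℂ) := by
      rw [hl1, hl2]; push_cast; ring
    have : ((2 * t : ℝ) : ℂ) • u = l1 • u + l2 • u := by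
      rw [← add_smul, hsum]
    rw [this, hadd, hunit l1 hn1, hunit l2 hn2, ← add_smul, hsum]
  have hreal : ∀ (t : ℝ) (u : X), g ((t : ℂ) • u) = (t : ℂ) • g u := by
    intro t u
    obtain ⟨n, hnpos, hlt⟩ : ∃ n : ℕ, (0 : ℝ) < n ∧ |t| < n :=
      ⟨⌊|t|⌋₊ + 1, by positivity, by push_cast; exact Nat.lt_floor_add_one _⟩
    have hnR : (n : ℝ) ≠ 0 := hnpos.ne'
    have hnC : (n : ℂ) ≠ 0 := by exact_mod_cast hnpos.ne'
    have hsm : |t / (2 * n)| ≤ 1 := by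
      rw [abs_div]
      rw [div_le_one (by positivity)]
      rw [abs_of_pos (by positivity : (0:ℝ) < 2 * n)]
      nlinarith
    have key := hreal2 (t / (2 * n)) hsm u
    have heq : (2 * (t / (2 * n)) : ℝ) = t / n := by field_simp
    rw [heq] at key
    have hfact : (t : ℂ) = (n : ℂ) * ((t / n : ℝ) : ℂ) := by
      push_cast
      rw [mul_comm, div_mul_cancel₀ _ hnC]
    calc g ((t : ℂ) • u) = g ((n : ℂ) • (((t / n : ℝ) : ℂ) • u)) := by
          rw [smul_smul, ← hfact]
      _ = (n : ℂ) • g (((t / n : ℝ) : ℂ) • u) := hnat n _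
      _ = (n : ℂ) • (((t / n : ℝ) : ℂ) • g u) := by rw [key]
      _ = (t : ℂ) • g u := by rw [smul_smul, ← hfact]
  intro c u
  rcases eq_or_ne c 0 with hc | hc
  · simp [hc, h0]
  · have hcn : (0 : ℝ) < ‖c‖ := norm_pos_iff.mpr hc
    have hC : ((‖c‖ : ℝ) : ℂ) ≠ 0 := by exact_mod_cast hcn.ne'
    have hu1 : ‖c / (‖c‖ : ℂ)‖ = 1 := by
      rw [norm_div, Complex.norm_real, Real.norm_of_nonneg (norm_nonneg c), div_self hcn.ne']
    have hfact : c = ((‖c‖ : ℝ) : ℂ) * (c / (‖c‖ : ℂ)) := by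
      rw [mul_comm, div_mul_cancel₀ _ hC]
    calc g (c • u) = g (((‖c‖ : ℝ) : ℂ) • ((c / (‖c‖ : ℂ)) • u)) := by rw [smul_smul, ← hfact]
      _ = ((‖c‖ : ℝ) : ℂ) • g ((c / (‖c‖ : ℂ)) • u) := hreal _ _
      _ = ((‖c‖ : ℝ) : ℂ) • ((c / (‖c‖ : ℂ)) • g u) := by rw [hunit _ hu1]
      _ = c • g u := by rw [smul_smul, ← hfact]

lemma aux_add {X Y : Type*} [AddCommGroup X] [AddCommGroup Y] [Module ℂ Y] (g : X → Y)
    (h0 : g 0 = 0) (hJ : ∀ u v, g (u + v) + g (u - v) = (2:ℂ) • g u) (u v : X) :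
    g (u + v) = g u + g v := by
  have odd : ∀ t, g (-t) = - g t := by
    intro t
    have h := hJ 0 t
    rw [zero_add, zero_sub, h0, smul_zero] at h
    exact eq_neg_of_add_eq_zero_right ((add_comm (g t) (g (-t))) ▸ h)
  have h1 := hJ u v
  have h2 := hJ v u
  rw [add_comm v u, show v - u = -(u - v) from (neg_sub u v).symm, odd] at h2
  have e2 : g (u + v) - (g u + g v)
      = (2⁻¹:ℂ) • ((g (u + v) + g (u - v)) + (g (u + v) + - g (u - v))
          - ((2:ℂ) • g u + (2:ℂ) • g v)) := by module
  rw [h1] at e2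
  rw [show g (u + v) + - g (u - v) = (2:ℂ) • g v from h2] at e2
  rw [sub_self, smul_zero] at e2
  exact sub_eq_zero.mp e2

theorem stmt_9 (s : ℂ) (hs0 : s ≠ 0) (hs1 : ‖s‖ < 1) (r θ : ℝ) (hr : 2 < r) (hθ : 0 ≤ θ)
    (f : A → A → A → A)
    (hzero : ∀ x z a : A, f x 0 a = 0 ∧ f 0 z a = 0 ∧ f x z 0 = 0)
    (hineq : ∀ l m e : ℂ, ‖l‖ = 1 → ‖m‖ = 1 → ‖e‖ = 1 → ∀ x y z w a b : A,
      ‖(2 : ℂ) • f ((2 : ℂ)⁻¹ • (l • (x + y))) (m • (z - w)) (e • (a + b))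
          + (2 : ℂ) • f ((2 : ℂ)⁻¹ • (l • (x - y))) (m • (z + w)) (e • (a - b))
          - (l * m * e) • ((2 : ℂ) • f x z a - (2 : ℂ) • f x w b
              + (2 : ℂ) • f y z b - (2 : ℂ) • f y w a)‖
        ≤ ‖s • D₁ f x y z w a b‖ + θ * (‖x‖ ^ r + ‖y‖ ^ r) * (‖z‖ ^ r + ‖w‖ ^ r) * (‖a‖ ^ r + ‖b‖ ^ r)) :
    (∃! D : A → A → A → A, CTrilinear D ∧
      ∀ x z a : A, ‖f x z a - D x z a‖ ≤ (2 : ℝ) ^ r * θ / (2 * ((2 : ℝ) ^ r - 2)) * (‖x‖ ^ r * ‖z‖ ^ r * ‖a‖ ^ r)) ∧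
    ((∀ x y z a : A,
      ‖f (x * y) z a - f x z a * y - x * f y z a‖
        ≤ θ * (‖x‖ ^ r + ‖y‖ ^ r) * ‖z‖ ^ r * ‖a‖ ^ r) →
     (∀ (σ : Equiv.Perm (Fin 3)) (x : Fin 3 → A),
      ‖f (x (σ 0)) (x (σ 1)) (x (σ 2)) - f (x 0) (x 1) (x 2)‖
        ≤ θ * ‖x 0‖ ^ r * ‖x 1‖ ^ r * ‖x 2‖ ^ r) →
     ∀ D : A → A → A → A,
       (CTrilinear D ∧ ∀ x z a : A, ‖f x z a - D x z a‖ ≤ (2 : ℝ) ^ r * θ / (2 * ((2 : ℝ) ^ r - 2)) * (‖x‖ ^ r * ‖z‖ ^ r * ‖a‖ ^ r)) →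
       PermutingTriderivation D) := by
  classical
  have hz1 : ∀ x a : A, f x 0 a = 0 := fun x a => (hzero x 0 a).1
  have hz2 : ∀ z a : A, f 0 z a = 0 := fun z a => (hzero 0 z a).2.1
  have hz3 : ∀ x z : A, f x z 0 = 0 := fun x z => (hzero x z 0).2.2
  have hr0 : r ≠ 0 := by linarith
  have hz0r : ‖(0:A)‖ ^ r = 0 := by rw [norm_zero]; exact Real.zero_rpow hr0
  have key : ∀ x z a : A, ‖(2:ℂ) • f ((2:ℂ)⁻¹ • x) z a - f x z a‖
      ≤ θ / 2 * (‖x‖^r * ‖z‖^r * ‖a‖^r) := by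
    intro x z a
    have h := hineq 1 1 1 norm_one norm_one norm_one x 0 z 0 a 0
    have e2 : D₁ f x 0 z 0 a 0 = 0 := by
      simp only [D₁, add_zero, sub_zero, hz1, hz2, hz3, smul_zero]
      module
    rw [e2, smul_zero, norm_zero] at h
    have e1 : (2 : ℂ) • f ((2 : ℂ)⁻¹ • ((1:ℂ) • (x + 0))) ((1:ℂ) • (z - 0)) ((1:ℂ) • (a + 0))
          + (2 : ℂ) • f ((2 : ℂ)⁻¹ • ((1:ℂ) • (x - 0))) ((1:ℂ) • (z + 0)) ((1:ℂ) • (a - 0))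
          - ((1 * 1 * 1 : ℂ)) • ((2 : ℂ) • f x z a - (2 : ℂ) • f x 0 0
              + (2 : ℂ) • f 0 z 0 - (2 : ℂ) • f 0 0 a)
        = (2:ℂ) • ((2:ℂ) • f ((2:ℂ)⁻¹ • x) z a - f x z a) := by
      simp only [one_smul, add_zero, sub_zero, hz1, hz2, hz3, smul_zero]
      module
    rw [e1, norm_smul] at h
    simp only [norm_zero, Real.zero_rpow hr0, add_zero, zero_add] at h
    rw [show ‖(2:ℂ)‖ = 2 by norm_num] at h
    nlinarith [norm_nonneg ((2:ℂ) • f ((2:ℂ)⁻¹ • x) z a - f x z a)]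
  have h2r1 : (2:ℝ) < (2:ℝ)^r := by
    calc (2:ℝ) = (2:ℝ)^(1:ℝ) := by rw [Real.rpow_one]
    _ < (2:ℝ)^r := Real.rpow_lt_rpow_of_exponent_lt one_lt_two (by linarith)
  have h2rpos : (0:ℝ) < (2:ℝ)^r := Real.rpow_pos_of_pos two_pos r
  set K : ℝ := (2:ℝ)^r * θ / (2 * ((2:ℝ)^r - 2)) with hKdef
  have hbase : ∀ (n : ℕ), (((2:ℝ)⁻¹)^n)^r = ((2:ℝ)^(-r))^n := by
    intro n
    rw [← Real.rpow_natCast ((2:ℝ)⁻¹) n, ← Real.rpow_natCast ((2:ℝ)^(-r)) n,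
      ← Real.rpow_mul (by norm_num : (0:ℝ) ≤ 2⁻¹),
      ← Real.rpow_mul (by norm_num : (0:ℝ) ≤ 2),
      show (2:ℝ)⁻¹ = (2:ℝ)^(-1:ℝ) by norm_num [Real.rpow_neg_one],
      ← Real.rpow_mul (by norm_num : (0:ℝ) ≤ 2)]
    ring_nf
  have hnorm2n : ∀ n : ℕ, ‖((2:ℂ))^n‖ = (2:ℝ)^n := by
    intro n; rw [norm_pow]; norm_num
  have hnormhalf : ∀ (n : ℕ) (u : A), ‖(((2:ℂ))⁻¹)^n • u‖ ^ r = (((2:ℝ))^(-r))^n * ‖u‖^r := by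
    intro n u
    rw [norm_smul, norm_pow, norm_inv, show ‖(2:ℂ)‖ = 2 by norm_num,
      Real.mul_rpow (by positivity) (norm_nonneg u), hbase]
  have hmulpow : ∀ n : ℕ, (2:ℝ)^n * ((2:ℝ)^(-r))^n = ((2:ℝ)^(1-r))^n := by
    intro n
    rw [show (2:ℝ)^n = ((2:ℝ)^(1:ℝ))^n by norm_num, ← mul_pow,
      ← Real.rpow_add (by norm_num : (0:ℝ) < 2)]
    ring_nf
  have hq : ((2:ℝ)^(1-r)) < 1 := Real.rpow_lt_one_of_one_lt_of_neg one_lt_two (by linarith)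
  have hqnn : (0:ℝ) ≤ (2:ℝ)^(1-r) := Real.rpow_nonneg (by norm_num) _
  have hdist : ∀ x z a : A, ∀ n : ℕ,
      dist ((2:ℂ)^n • f (((2:ℂ)⁻¹)^n • x) z a) ((2:ℂ)^(n+1) • f (((2:ℂ)⁻¹)^(n+1) • x) z a)
        ≤ (θ/2 * (‖x‖^r * ‖z‖^r * ‖a‖^r)) * ((2:ℝ)^(1-r))^n := by
    intro x z a n
    rw [dist_eq_norm]
    have harg : ((2:ℂ)⁻¹)^(n+1) • x = (2:ℂ)⁻¹ • (((2:ℂ)⁻¹)^n • x) := by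
      rw [smul_smul, ← pow_succ']
    rw [harg]
    have h1 : (2:ℂ)^n • f (((2:ℂ)⁻¹)^n • x) z a
          - (2:ℂ)^(n+1) • f ((2:ℂ)⁻¹ • (((2:ℂ)⁻¹)^n • x)) z a
        = (2:ℂ)^n • (f (((2:ℂ)⁻¹)^n • x) z a - (2:ℂ) • f ((2:ℂ)⁻¹ • (((2:ℂ)⁻¹)^n • x)) z a) := by
      module
    rw [h1, norm_smul, hnorm2n]
    have h3 := key (((2:ℂ)⁻¹)^n • x) z a
    rw [norm_sub_rev, hnormhalf] at h3
    calc (2:ℝ)^n * ‖f (((2:ℂ)⁻¹)^n • x) z a - (2:ℂ) • f ((2:ℂ)⁻¹ • (((2:ℂ)⁻¹)^n • x)) z a‖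
        ≤ (2:ℝ)^n * (θ/2 * (((2:ℝ)^(-r))^n * ‖x‖^r * ‖z‖^r * ‖a‖^r)) := by
          apply mul_le_mul_of_nonneg_left _ (by positivity)
          calc ‖f (((2:ℂ)⁻¹)^n • x) z a - (2:ℂ) • f ((2:ℂ)⁻¹ • (((2:ℂ)⁻¹)^n • x)) z a‖
              ≤ θ/2 * ((((2:ℝ))^(-r))^n * ‖x‖^r * (‖z‖^r * ‖a‖^r)) := by
                refine h3.trans (le_of_eq ?_); ring
            _ = θ/2 * (((2:ℝ)^(-r))^n * ‖x‖^r * ‖z‖^r * ‖a‖^r) := by ring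
      _ = (θ/2 * (‖x‖^r * ‖z‖^r * ‖a‖^r)) * ((2:ℝ)^(1-r))^n := by
          rw [← hmulpow n]; ring
  have hex : ∀ x z a : A, ∃ L : A,
      Tendsto (fun n : ℕ => (2:ℂ)^n • f (((2:ℂ)⁻¹)^n • x) z a) atTop (𝓝 L) :=
    fun x z a => cauchySeq_tendsto_of_complete (cauchySeq_of_le_geometric _ _ hq (hdist x z a))
  choose Df hDf using hex
  have hDbound : ∀ x z a : A, ‖f x z a - Df x z a‖ ≤ K * (‖x‖^r * ‖z‖^r * ‖a‖^r) := by
    intro x z a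
    have h := dist_le_of_le_geometric_of_tendsto₀ _ _ hq (hdist x z a) (hDf x z a)
    simp only [pow_zero, one_smul] at h
    rw [dist_eq_norm] at h
    refine h.trans (le_of_eq ?_)
    have h1r : 1 - (2:ℝ)^(1-r) = ((2:ℝ)^r - 2)/(2:ℝ)^r := by
      rw [show (2:ℝ)^(1-r) = 2 / (2:ℝ)^r by
        rw [Real.rpow_sub (by norm_num), Real.rpow_one]]
      field_simp
    rw [h1r, hKdef]
    have hne : (2:ℝ)^r - 2 ≠ 0 := by linarith
    field_simp
  have hDfshift : ∀ x z a : A,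
      Tendsto (fun n : ℕ => (2:ℂ)^(n+1) • f (((2:ℂ)⁻¹)^(n+1) • x) z a) atTop (𝓝 (Df x z a)) := by
    intro x z a
    exact (hDf x z a).comp (tendsto_add_atTop_nat 1)
  have htheta0 : ∀ C : ℝ, Tendsto (fun n : ℕ => C * ((2:ℝ)^(1-r))^n) atTop (𝓝 0) := by
    intro C
    have := (tendsto_pow_atTop_nhds_zero_of_lt_one hqnn hq).const_mul C
    simpa using this
  have master : ∀ l m e : ℂ, ‖l‖ = 1 → ‖m‖ = 1 → ‖e‖ = 1 → ∀ x y z w a b : A,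
      ‖Df (l • (x+y)) (m • (z-w)) (e • (a+b)) + Df (l • (x-y)) (m • (z+w)) (e • (a-b))
        - (l*m*e) • ((2:ℂ) • Df x z a - (2:ℂ) • Df x w b + (2:ℂ) • Df y z b - (2:ℂ) • Df y w a)‖
      ≤ ‖s‖ * ‖Df (x+y) (z-w) (a+b) + Df (x-y) (z+w) (a-b) - (2:ℂ) • Df x z a
          + (2:ℂ) • Df x w b - (2:ℂ) • Df y z b + (2:ℂ) • Df y w a‖ := by
    intro l m e hl hm he x y z w a b
    set u : ℕ → A := fun n =>
        (2:ℂ)^(n+1) • f (((2:ℂ)⁻¹)^(n+1) • (l•(x+y))) (m•(z-w)) (e•(a+b))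
        + (2:ℂ)^(n+1) • f (((2:ℂ)⁻¹)^(n+1) • (l•(x-y))) (m•(z+w)) (e•(a-b))
        - (l*m*e) • ((2:ℂ) • ((2:ℂ)^n • f (((2:ℂ)⁻¹)^n • x) z a)
            - (2:ℂ) • ((2:ℂ)^n • f (((2:ℂ)⁻¹)^n • x) w b)
            + (2:ℂ) • ((2:ℂ)^n • f (((2:ℂ)⁻¹)^n • y) z b)
            - (2:ℂ) • ((2:ℂ)^n • f (((2:ℂ)⁻¹)^n • y) w a)) with hu
    set R : ℕ → A := fun n =>
        (2:ℂ)^n • f (((2:ℂ)⁻¹)^n • (x+y)) (z-w) (a+b)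
        + (2:ℂ)^n • f (((2:ℂ)⁻¹)^n • (x-y)) (z+w) (a-b)
        - (2:ℂ) • ((2:ℂ)^n • f (((2:ℂ)⁻¹)^n • x) z a)
        + (2:ℂ) • ((2:ℂ)^n • f (((2:ℂ)⁻¹)^n • x) w b)
        - (2:ℂ) • ((2:ℂ)^n • f (((2:ℂ)⁻¹)^n • y) z b)
        + (2:ℂ) • ((2:ℂ)^n • f (((2:ℂ)⁻¹)^n • y) w a) with hR
    have tendL : Tendsto u atTop
        (𝓝 (Df (l•(x+y)) (m•(z-w)) (e•(a+b)) + Df (l•(x-y)) (m•(z+w)) (e•(a-b))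
          - (l*m*e) • ((2:ℂ)•Df x z a - (2:ℂ)•Df x w b + (2:ℂ)•Df y z b - (2:ℂ)•Df y w a))) :=
      Tendsto.sub ((hDfshift _ _ _).add (hDfshift _ _ _))
        (Tendsto.const_smul
          ((((((hDf x z a).const_smul (2:ℂ)).sub ((hDf x w b).const_smul (2:ℂ))).add
            ((hDf y z b).const_smul (2:ℂ))).sub ((hDf y w a).const_smul (2:ℂ)))) _)
    have tendR : Tendsto R atTop
        (𝓝 (Df (x+y) (z-w) (a+b) + Df (x-y) (z+w) (a-b) - (2:ℂ) • Df x z a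
          + (2:ℂ) • Df x w b - (2:ℂ) • Df y z b + (2:ℂ) • Df y w a)) :=
      (((((hDf (x+y) (z-w) (a+b)).add (hDf (x-y) (z+w) (a-b))).sub
        ((hDf x z a).const_smul (2:ℂ))).add ((hDf x w b).const_smul (2:ℂ))).sub
        ((hDf y z b).const_smul (2:ℂ))).add ((hDf y w a).const_smul (2:ℂ))
    have hper : ∀ n : ℕ, ‖u n‖ ≤ ‖s‖ * ‖R n‖
        + (θ * (‖x‖^r + ‖y‖^r) * (‖z‖^r + ‖w‖^r) * (‖a‖^r + ‖b‖^r)) * ((2:ℝ)^(1-r))^n := by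
      intro n
      have h := hineq l m e hl hm he (((2:ℂ)⁻¹)^n • x) (((2:ℂ)⁻¹)^n • y) z w a b
      have eargA : (2:ℂ)⁻¹ • (l • (((2:ℂ)⁻¹)^n • x + ((2:ℂ)⁻¹)^n • y))
          = ((2:ℂ)⁻¹)^(n+1) • (l • (x+y)) := by module
      have eargB : (2:ℂ)⁻¹ • (l • (((2:ℂ)⁻¹)^n • x - ((2:ℂ)⁻¹)^n • y))
          = ((2:ℂ)⁻¹)^(n+1) • (l • (x-y)) := by module
      rw [eargA, eargB] at h
      have ebig : (2:ℂ)^n • ((2:ℂ) • f (((2:ℂ)⁻¹)^(n+1) • (l•(x+y))) (m•(z-w)) (e•(a+b))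
          + (2:ℂ) • f (((2:ℂ)⁻¹)^(n+1) • (l•(x-y))) (m•(z+w)) (e•(a-b))
          - (l*m*e) • ((2:ℂ) • f (((2:ℂ)⁻¹)^n • x) z a - (2:ℂ) • f (((2:ℂ)⁻¹)^n • x) w b
              + (2:ℂ) • f (((2:ℂ)⁻¹)^n • y) z b - (2:ℂ) • f (((2:ℂ)⁻¹)^n • y) w a)) = u n := by
        rw [hu]; module
      have eD : (2:ℂ)^n • D₁ f (((2:ℂ)⁻¹)^n • x) (((2:ℂ)⁻¹)^n • y) z w a b = R n := by
        rw [hR]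
        simp only [D₁]
        rw [show ((2:ℂ)⁻¹)^n • x + ((2:ℂ)⁻¹)^n • y = ((2:ℂ)⁻¹)^n • (x+y) by module,
          show ((2:ℂ)⁻¹)^n • x - ((2:ℂ)⁻¹)^n • y = ((2:ℂ)⁻¹)^n • (x-y) by module]
        module
      have h2 := mul_le_mul_of_nonneg_left h (by positivity : (0:ℝ) ≤ (2:ℝ)^n)
      rw [mul_add] at h2
      have eL : (2:ℝ)^n * ‖(2:ℂ) • f (((2:ℂ)⁻¹)^(n+1) • (l•(x+y))) (m•(z-w)) (e•(a+b))
          + (2:ℂ) • f (((2:ℂ)⁻¹)^(n+1) • (l•(x-y))) (m•(z+w)) (e•(a-b))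
          - (l*m*e) • ((2:ℂ) • f (((2:ℂ)⁻¹)^n • x) z a - (2:ℂ) • f (((2:ℂ)⁻¹)^n • x) w b
              + (2:ℂ) • f (((2:ℂ)⁻¹)^n • y) z b - (2:ℂ) • f (((2:ℂ)⁻¹)^n • y) w a)‖ = ‖u n‖ := by
        rw [← ebig, norm_smul, hnorm2n]
      have eR : (2:ℝ)^n * ‖s • D₁ f (((2:ℂ)⁻¹)^n • x) (((2:ℂ)⁻¹)^n • y) z w a b‖
          = ‖s‖ * ‖R n‖ := by
        rw [← eD, norm_smul s, norm_smul ((2:ℂ)^n), hnorm2n]; ring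
      have eT : (2:ℝ)^n * (θ * (‖((2:ℂ)⁻¹)^n • x‖^r + ‖((2:ℂ)⁻¹)^n • y‖^r)
            * (‖z‖^r + ‖w‖^r) * (‖a‖^r + ‖b‖^r))
          = (θ * (‖x‖^r + ‖y‖^r) * (‖z‖^r + ‖w‖^r) * (‖a‖^r + ‖b‖^r)) * ((2:ℝ)^(1-r))^n := by
        rw [hnormhalf, hnormhalf, ← hmulpow n]; ring
      rw [eL, eR, eT] at h2
      exact h2
    refine le_of_tendsto_of_tendsto' tendL.norm ?_ hper
    have := (tendR.norm.const_mul ‖s‖).add (htheta0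
      (θ * (‖x‖^r + ‖y‖^r) * (‖z‖^r + ‖w‖^r) * (‖a‖^r + ‖b‖^r)))
    simpa using this
  have hDz1 : ∀ x a : A, Df x 0 a = 0 := by
    intro x a
    refine tendsto_nhds_unique (hDf x 0 a) ?_
    simp only [hz1, smul_zero]
    exact tendsto_const_nhds
  have hDz2 : ∀ z a : A, Df 0 z a = 0 := by
    intro z a
    refine tendsto_nhds_unique (hDf 0 z a) ?_
    simp only [smul_zero, hz2]
    exact tendsto_const_nhds
  have hDz3 : ∀ x z : A, Df x z 0 = 0 := by
    intro x z
    refine tendsto_nhds_unique (hDf x z 0) ?_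
    simp only [hz3, smul_zero]
    exact tendsto_const_nhds
  have star : ∀ x y z w a b : A, Df (x+y) (z-w) (a+b) + Df (x-y) (z+w) (a-b)
      = (2:ℂ) • Df x z a - (2:ℂ) • Df x w b + (2:ℂ) • Df y z b - (2:ℂ) • Df y w a := by
    intro x y z w a b
    have h := master 1 1 1 norm_one norm_one norm_one x y z w a b
    simp only [one_smul, one_mul, mul_one] at h
    set P : A := Df (x+y) (z-w) (a+b) + Df (x-y) (z+w) (a-b) - (2:ℂ) • Df x z a
        + (2:ℂ) • Df x w b - (2:ℂ) • Df y z b + (2:ℂ) • Df y w a with hP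
    have hL : Df (x+y) (z-w) (a+b) + Df (x-y) (z+w) (a-b)
        - ((2:ℂ) • Df x z a - (2:ℂ) • Df x w b + (2:ℂ) • Df y z b - (2:ℂ) • Df y w a) = P := by
      rw [hP]; module
    rw [hL] at h
    have hP0 : P = 0 := norm_eq_zero.mp (by nlinarith [norm_nonneg P])
    rw [← sub_eq_zero, hL]
    exact hP0
  have homog : ∀ l m e : ℂ, ‖l‖ = 1 → ‖m‖ = 1 → ‖e‖ = 1 → ∀ x z a : A,
      Df (l • x) (m • z) (e • a) = (l * m * e) • Df x z a := by
    intro l m e hl hm he x z a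
    have h := master l m e hl hm he x 0 z 0 a 0
    simp only [add_zero, sub_zero, hDz1, hDz2, hDz3, smul_zero, zero_add] at h
    have hz' : Df x z a + Df x z a - (2:ℂ) • Df x z a = 0 := by module
    rw [hz', norm_zero, mul_zero] at h
    have h0 : Df (l • x) (m • z) (e • a) + Df (l • x) (m • z) (e • a)
        - (l * m * e) • ((2:ℂ) • Df x z a) = 0 := by
      rw [← norm_le_zero_iff]
      exact h
    have e2 : Df (l • x) (m • z) (e • a) - (l * m * e) • Df x z a
        = (2⁻¹:ℂ) • (Df (l • x) (m • z) (e • a) + Df (l • x) (m • z) (e • a)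
            - (l * m * e) • ((2:ℂ) • Df x z a)) := by module
    rw [h0, smul_zero] at e2
    exact sub_eq_zero.mp e2
  have J1 : ∀ x y z a : A, Df (x+y) z a + Df (x-y) z a = (2:ℂ) • Df x z a := by
    intro x y z a
    have h := star x y z 0 a 0
    simpa [hDz1, hDz2, hDz3] using h
  have J2 : ∀ x z w a : A, Df x (z-w) a + Df x (z+w) a = (2:ℂ) • Df x z a := by
    intro x z w a
    have h := star x 0 z w a 0
    simpa [hDz1, hDz2, hDz3] using h
  have J3 : ∀ x z a b : A, Df x z (a+b) + Df x z (a-b) = (2:ℂ) • Df x z a := by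
    intro x z a b
    have h := star x 0 z 0 a b
    simpa [hDz1, hDz2, hDz3] using h
  have addD1 : ∀ (z a u v : A), Df (u+v) z a = Df u z a + Df v z a := fun z a =>
    aux_add (fun t => Df t z a) (hDz2 z a) (fun u v => J1 u v z a)
  have addD2 : ∀ (x a u v : A), Df x (u+v) a = Df x u a + Df x v a := fun x a =>
    aux_add (fun t => Df x t a) (hDz1 x a) (fun u v => by
      have := J2 x u v a
      rw [add_comm] at this
      exact this)
  have addD3 : ∀ (x z u v : A), Df x z (u+v) = Df x z u + Df x z v := fun x z =>
    aux_add (fun t => Df x z t) (hDz3 x z) (fun u v => J3 x z u v)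
  have lin1 : ∀ (c : ℂ) (x z a : A), Df (c • x) z a = c • Df x z a := by
    intro c x z a
    exact aux_clin (fun t => Df t z a) (fun u v => addD1 z a u v)
      (fun c' hc' u => by
        have := homog c' 1 1 hc' norm_one norm_one u z a
        simpa using this) c x
  have lin2 : ∀ (c : ℂ) (x z a : A), Df x (c • z) a = c • Df x z a := by
    intro c x z a
    exact aux_clin (fun t => Df x t a) (fun u v => addD2 x a u v)
      (fun c' hc' u => by
        have := homog 1 c' 1 norm_one hc' norm_one x u a
        simpa using this) c z
  have lin3 : ∀ (c : ℂ) (x z a : A), Df x z (c • a) = c • Df x z a := by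
    intro c x z a
    exact aux_clin (fun t => Df x z t) (fun u v => addD3 x z u v)
      (fun c' hc' u => by
        have := homog 1 1 c' norm_one norm_one hc' x z u
        simpa using this) c a
  have hDfTri : CTrilinear Df :=
    ⟨⟨fun x x' z a => addD1 z a x x', fun x z z' a => addD2 x a z z',
      fun x z a a' => addD3 x z a a'⟩, lin1, lin2, lin3⟩
  have hcanc : ∀ (n : ℕ) (v : A), (2:ℂ)^n • (((2:ℂ)⁻¹)^n • v) = v := by
    intro n v
    rw [smul_smul, ← mul_pow, mul_inv_cancel₀ two_ne_zero, one_pow, one_smul]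
  have huniq : ∀ D' : A → A → A → A, CTrilinear D' →
      (∀ x z a : A, ‖f x z a - D' x z a‖ ≤ K * (‖x‖^r * ‖z‖^r * ‖a‖^r)) →
      ∀ x z a : A, D' x z a = Df x z a := by
    intro D' hT hB x z a
    have hb : ∀ n : ℕ, ‖D' x z a - Df x z a‖
        ≤ (2*K*(‖x‖^r * ‖z‖^r * ‖a‖^r)) * ((2:ℝ)^(1-r))^n := by
      intro n
      have hD'h : D' (((2:ℂ)⁻¹)^n • x) z a = ((2:ℂ)⁻¹)^n • D' x z a := hT.2.1 _ x z a
      have hDfh : Df (((2:ℂ)⁻¹)^n • x) z a = ((2:ℂ)⁻¹)^n • Df x z a := lin1 _ x z a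
      have e1 : D' x z a - Df x z a
          = (2:ℂ)^n • ((D' (((2:ℂ)⁻¹)^n • x) z a - f (((2:ℂ)⁻¹)^n • x) z a)
            + (f (((2:ℂ)⁻¹)^n • x) z a - Df (((2:ℂ)⁻¹)^n • x) z a)) := by
        rw [smul_add, smul_sub, smul_sub, hD'h, hDfh, hcanc, hcanc]
        abel
      rw [e1, norm_smul, hnorm2n]
      have hA := hB (((2:ℂ)⁻¹)^n • x) z a
      have hA2 := hDbound (((2:ℂ)⁻¹)^n • x) z a
      rw [hnormhalf] at hA hA2
      rw [norm_sub_rev] at hA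
      calc (2:ℝ)^n * ‖(D' (((2:ℂ)⁻¹)^n • x) z a - f (((2:ℂ)⁻¹)^n • x) z a)
            + (f (((2:ℂ)⁻¹)^n • x) z a - Df (((2:ℂ)⁻¹)^n • x) z a)‖
          ≤ (2:ℝ)^n * (‖D' (((2:ℂ)⁻¹)^n • x) z a - f (((2:ℂ)⁻¹)^n • x) z a‖
            + ‖f (((2:ℂ)⁻¹)^n • x) z a - Df (((2:ℂ)⁻¹)^n • x) z a‖) := by
            exact mul_le_mul_of_nonneg_left (norm_add_le _ _) (by positivity)
        _ ≤ (2:ℝ)^n * (K * (((2:ℝ)^(-r))^n * ‖x‖^r * ‖z‖^r * ‖a‖^r)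
            + K * (((2:ℝ)^(-r))^n * ‖x‖^r * ‖z‖^r * ‖a‖^r)) := by
            apply mul_le_mul_of_nonneg_left _ (by positivity)
            apply add_le_add
            · exact hA.trans (le_of_eq (by ring))
            · exact hA2.trans (le_of_eq (by ring))
        _ = (2*K*(‖x‖^r * ‖z‖^r * ‖a‖^r)) * ((2:ℝ)^(1-r))^n := by
            rw [← hmulpow n]; ring
    have h0 : ‖D' x z a - Df x z a‖ ≤ 0 :=
      le_of_tendsto_of_tendsto' tendsto_const_nhds (htheta0 _) hb
    rw [← sub_eq_zero]
    exact norm_le_zero_iff.mp h0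
  constructor
  · refine ⟨Df, ⟨hDfTri, fun x z a => hDbound x z a⟩, ?_⟩
    intro D' hD'
    funext x z a
    exact huniq D' hD'.1 hD'.2 x z a
  · intro hder hperm D hD
    obtain ⟨hDT, hDB⟩ := hD
    have hDeq : ∀ x z a : A, D x z a = Df x z a := huniq D hDT hDB
    have htheta1 : ∀ (p : ℝ), 0 ≤ p → p < 1 → ∀ C : ℝ,
        Tendsto (fun n : ℕ => C * p^n) atTop (𝓝 0) := by
      intro p hp0 hp1 C
      simpa using (tendsto_pow_atTop_nhds_zero_of_lt_one hp0 hp1).const_mul C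
    have hq3 : ((2:ℝ)^(1-r))^3 < 1 := pow_lt_one₀ hqnn hq (by norm_num)
    have h2q' : 2 * (2:ℝ)^(1-r) < 1 := by
      have h1 : (2:ℝ)^(2-r) = (2:ℝ)^(1:ℝ) * (2:ℝ)^(1-r) := by
        rw [← Real.rpow_add two_pos]; ring_nf
      rw [Real.rpow_one] at h1
      rw [← h1]
      exact Real.rpow_lt_one_of_one_lt_of_neg one_lt_two (by linarith)
    have hone : ∀ n : ℕ, ((2:ℂ)^n * (2:ℂ)^n * (2:ℂ)^n)
        * (((2:ℂ)⁻¹)^n * (((2:ℂ)⁻¹)^n * ((2:ℂ)⁻¹)^n)) = 1 := by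
      intro n
      rw [← mul_pow, ← mul_pow, ← mul_pow, ← mul_pow, ← mul_pow]
      rw [show (2:ℂ) * 2 * 2 * (2⁻¹ * (2⁻¹ * 2⁻¹)) = 1 by norm_num, one_pow]
    have tendGen : ∀ u v w : A, Tendsto (fun n : ℕ =>
        ((2:ℂ)^n * (2:ℂ)^n * (2:ℂ)^n) • f (((2:ℂ)⁻¹)^n • u) (((2:ℂ)⁻¹)^n • v) (((2:ℂ)⁻¹)^n • w))
        atTop (𝓝 (Df u v w)) := by
      intro u v w
      have hb : ∀ n : ℕ, ‖((2:ℂ)^n * (2:ℂ)^n * (2:ℂ)^n)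
            • f (((2:ℂ)⁻¹)^n • u) (((2:ℂ)⁻¹)^n • v) (((2:ℂ)⁻¹)^n • w) - Df u v w‖
          ≤ (K * (‖u‖^r * ‖v‖^r * ‖w‖^r)) * (((2:ℝ)^(1-r))^3)^n := by
        intro n
        have hDfh : Df (((2:ℂ)⁻¹)^n • u) (((2:ℂ)⁻¹)^n • v) (((2:ℂ)⁻¹)^n • w)
            = (((2:ℂ)⁻¹)^n * (((2:ℂ)⁻¹)^n * ((2:ℂ)⁻¹)^n)) • Df u v w := by
          rw [lin1, lin2, lin3, smul_smul, smul_smul]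
          congr 1
          ring
        have e1 : ((2:ℂ)^n * (2:ℂ)^n * (2:ℂ)^n)
              • f (((2:ℂ)⁻¹)^n • u) (((2:ℂ)⁻¹)^n • v) (((2:ℂ)⁻¹)^n • w) - Df u v w
            = ((2:ℂ)^n * (2:ℂ)^n * (2:ℂ)^n)
              • (f (((2:ℂ)⁻¹)^n • u) (((2:ℂ)⁻¹)^n • v) (((2:ℂ)⁻¹)^n • w)
                - Df (((2:ℂ)⁻¹)^n • u) (((2:ℂ)⁻¹)^n • v) (((2:ℂ)⁻¹)^n • w)) := by
          rw [smul_sub, hDfh, smul_smul, hone, one_smul]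
        rw [e1, norm_smul, norm_mul, norm_mul, hnorm2n]
        have hA := hDbound (((2:ℂ)⁻¹)^n • u) (((2:ℂ)⁻¹)^n • v) (((2:ℂ)⁻¹)^n • w)
        rw [hnormhalf, hnormhalf, hnormhalf] at hA
        calc (2:ℝ)^n * (2:ℝ)^n * (2:ℝ)^n
              * ‖f (((2:ℂ)⁻¹)^n • u) (((2:ℂ)⁻¹)^n • v) (((2:ℂ)⁻¹)^n • w)
                - Df (((2:ℂ)⁻¹)^n • u) (((2:ℂ)⁻¹)^n • v) (((2:ℂ)⁻¹)^n • w)‖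
            ≤ (2:ℝ)^n * (2:ℝ)^n * (2:ℝ)^n
              * (K * (((2:ℝ)^(-r))^n * ‖u‖^r * (((2:ℝ)^(-r))^n * ‖v‖^r)
                  * (((2:ℝ)^(-r))^n * ‖w‖^r))) :=
              mul_le_mul_of_nonneg_left hA (by positivity)
          _ = (K * (‖u‖^r * ‖v‖^r * ‖w‖^r)) * (((2:ℝ)^(1-r))^3)^n := by
              rw [← pow_right_comm, ← hmulpow n]; ring
      have h0 := squeeze_zero_norm hb (htheta1 _ (by positivity) hq3 _)
      have := h0.add (tendsto_const_nhds (x := Df u v w))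
      simpa using this
    refine ⟨hDT, ?_, ?_⟩
    · intro x y z a
      rw [hDeq (x*y) z a, hDeq x z a, hDeq y z a]
      have h2n : Tendsto (fun n : ℕ => 2*n) atTop atTop :=
        tendsto_atTop_mono (fun n => Nat.le_mul_of_pos_left n (by norm_num)) tendsto_id
      have t2n : Tendsto (fun n : ℕ => (2:ℂ)^(2*n) • f (((2:ℂ)⁻¹)^(2*n) • (x*y)) z a)
          atTop (𝓝 (Df (x*y) z a)) := (hDf (x*y) z a).comp h2n
      have tA : Tendsto (fun n : ℕ => ((2:ℂ)^n • f (((2:ℂ)⁻¹)^n • x) z a) * y)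
          atTop (𝓝 (Df x z a * y)) := (hDf x z a).mul tendsto_const_nhds
      have tB : Tendsto (fun n : ℕ => x * ((2:ℂ)^n • f (((2:ℂ)⁻¹)^n • y) z a))
          atTop (𝓝 (x * Df y z a)) := tendsto_const_nhds.mul (hDf y z a)
      have tdiff := (t2n.sub tA).sub tB
      have hb : ∀ n : ℕ, ‖(2:ℂ)^(2*n) • f (((2:ℂ)⁻¹)^(2*n) • (x*y)) z a
            - ((2:ℂ)^n • f (((2:ℂ)⁻¹)^n • x) z a) * y
            - x * ((2:ℂ)^n • f (((2:ℂ)⁻¹)^n • y) z a)‖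
          ≤ (θ * (‖x‖^r + ‖y‖^r) * ‖z‖^r * ‖a‖^r) * (2 * (2:ℝ)^(1-r))^n := by
        intro n
        have h := hder (((2:ℂ)⁻¹)^n • x) (((2:ℂ)⁻¹)^n • y) z a
        rw [hnormhalf, hnormhalf] at h
        have e1 : (2:ℂ)^(2*n) • f (((2:ℂ)⁻¹)^(2*n) • (x*y)) z a
              - ((2:ℂ)^n • f (((2:ℂ)⁻¹)^n • x) z a) * y
              - x * ((2:ℂ)^n • f (((2:ℂ)⁻¹)^n • y) z a)
            = ((2:ℂ)^n * (2:ℂ)^n) • (f ((((2:ℂ)⁻¹)^n • x) * (((2:ℂ)⁻¹)^n • y)) z a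
              - f (((2:ℂ)⁻¹)^n • x) z a * (((2:ℂ)⁻¹)^n • y)
              - (((2:ℂ)⁻¹)^n • x) * f (((2:ℂ)⁻¹)^n • y) z a) := by
          have eA : (((2:ℂ)⁻¹)^n • x) * (((2:ℂ)⁻¹)^n • y) = ((2:ℂ)⁻¹)^(2*n) • (x*y) := by
            rw [smul_mul_smul_comm, ← pow_add, two_mul]
          rw [smul_sub, smul_sub, eA]
          congr 1
          · congr 1
            · rw [two_mul, pow_add]
            · rw [← smul_mul_smul_comm, hcanc]
          · rw [← smul_mul_smul_comm, hcanc]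
        rw [e1, norm_smul, norm_mul, hnorm2n]
        calc (2:ℝ)^n * (2:ℝ)^n * ‖f ((((2:ℂ)⁻¹)^n • x) * (((2:ℂ)⁻¹)^n • y)) z a
              - f (((2:ℂ)⁻¹)^n • x) z a * (((2:ℂ)⁻¹)^n • y)
              - (((2:ℂ)⁻¹)^n • x) * f (((2:ℂ)⁻¹)^n • y) z a‖
            ≤ (2:ℝ)^n * (2:ℝ)^n * (θ * (((2:ℝ)^(-r))^n * ‖x‖^r + ((2:ℝ)^(-r))^n * ‖y‖^r)
                * ‖z‖^r * ‖a‖^r) := mul_le_mul_of_nonneg_left h (by positivity)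
          _ = (θ * (‖x‖^r + ‖y‖^r) * ‖z‖^r * ‖a‖^r) * (2 * (2:ℝ)^(1-r))^n := by
              rw [mul_pow, ← hmulpow n]; ring
      have hz := squeeze_zero_norm hb (htheta1 _ (by positivity) h2q' _)
      have hfin := tendsto_nhds_unique tdiff hz
      rw [sub_sub, sub_eq_zero] at hfin
      exact hfin
    · intro σ x
      rw [hDeq (x (σ 0)) (x (σ 1)) (x (σ 2)), hDeq (x 0) (x 1) (x 2)]
      have t1 := tendGen (x (σ 0)) (x (σ 1)) (x (σ 2))
      have t2 := tendGen (x 0) (x 1) (x 2)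
      have hb : ∀ n : ℕ, ‖((2:ℂ)^n * (2:ℂ)^n * (2:ℂ)^n)
            • f (((2:ℂ)⁻¹)^n • x (σ 0)) (((2:ℂ)⁻¹)^n • x (σ 1)) (((2:ℂ)⁻¹)^n • x (σ 2))
            - ((2:ℂ)^n * (2:ℂ)^n * (2:ℂ)^n)
            • f (((2:ℂ)⁻¹)^n • x 0) (((2:ℂ)⁻¹)^n • x 1) (((2:ℂ)⁻¹)^n • x 2)‖
          ≤ (θ * ‖x 0‖^r * ‖x 1‖^r * ‖x 2‖^r) * (((2:ℝ)^(1-r))^3)^n := by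
        intro n
        have h := hperm σ (fun i => ((2:ℂ)⁻¹)^n • x i)
        rw [hnormhalf, hnormhalf, hnormhalf] at h
        rw [← smul_sub, norm_smul, norm_mul, norm_mul, hnorm2n]
        calc (2:ℝ)^n * (2:ℝ)^n * (2:ℝ)^n
              * ‖f (((2:ℂ)⁻¹)^n • x (σ 0)) (((2:ℂ)⁻¹)^n • x (σ 1)) (((2:ℂ)⁻¹)^n • x (σ 2))
                - f (((2:ℂ)⁻¹)^n • x 0) (((2:ℂ)⁻¹)^n • x 1) (((2:ℂ)⁻¹)^n • x 2)‖
            ≤ (2:ℝ)^n * (2:ℝ)^n * (2:ℝ)^n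
              * (θ * (((2:ℝ)^(-r))^n * ‖x 0‖^r) * (((2:ℝ)^(-r))^n * ‖x 1‖^r)
                * (((2:ℝ)^(-r))^n * ‖x 2‖^r)) :=
              mul_le_mul_of_nonneg_left h (by positivity)
          _ = (θ * ‖x 0‖^r * ‖x 1‖^r * ‖x 2‖^r) * (((2:ℝ)^(1-r))^3)^n := by
              rw [← pow_right_comm, ← hmulpow n]; ring
      have hz := squeeze_zero_norm hb (htheta1 _ (by positivity) hq3 _)
      have hfin := tendsto_nhds_unique (t1.sub t2) hz
      exact sub_eq_zero.mp hfin
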